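/- Let G=(V,E) be a simple, connected, d-regular graph and let x∈V be a vertex not contained in a triangle (i.e., no two neighbours of x are adjacent) with d_x^-(z) ≤ 2 for all z∈S₂(x). If κ₀(x,y) = 0 for all y∈S₁(x), then the Bakry–Émery curvature satisfies K_∞(x) ≥ 0. -/
import Mathlib


open Filter
open scoped Classical

variable {V : Type*}

/-- The probability measure `μ_x^p` with idleness parameter `p`, on a `d`-regular graph:
`μ_x^p(x) = p`, `μ_x^p(z) = (1-p)/d` for `z` adjacent to `x`, and `0` otherwise. -/
noncomputable def muMeasure (G : SimpleGraph V) (d : ℕ) (p : ℝ) (x : V) : V → ℝ :=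
  fun z => if z = x then p else if G.Adj x z then (1 - p) / d else 0

/-- `π` is a transport plan transporting `μ₁` to `μ₂`. -/
def IsTransportPlan (μ₁ μ₂ : V → ℝ) (π : V → V → ℝ) : Prop :=
  (∀ u v, 0 ≤ π u v) ∧ (∀ u, ∑' v, π u v = μ₁ u) ∧ (∀ v, ∑' u, π u v = μ₂ v)

/-- The cost of a transport plan: `∑_{u,v} d(u,v) π(u,v)`. -/
noncomputable def transportCost (G : SimpleGraph V) (π : V → V → ℝ) : ℝ :=
  ∑' q : V × V, (G.dist q.1 q.2 : ℝ) * π q.1 q.2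

/-- The Wasserstein distance `W₁(μ₁, μ₂)`: infimum of costs over all transport plans. -/
noncomputable def W1 (G : SimpleGraph V) (μ₁ μ₂ : V → ℝ) : ℝ :=
  sInf {c : ℝ | ∃ π, IsTransportPlan μ₁ μ₂ π ∧ transportCost G π = c}

/-- The `p`-Ollivier Ricci curvature `κ_p(x,y) = 1 - W₁(μ_x^p, μ_y^p)` in a `d`-regular graph. -/
noncomputable def kappa (G : SimpleGraph V) (d : ℕ) (p : ℝ) (x y : V) : ℝ :=
  1 - W1 G (muMeasure G d p x) (muMeasure G d p y)

/-- The Lin–Lu–Yau curvature `κ_LLY(x,y) = lim_{p→1} κ_p(x,y)/(1-p)`. -/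
noncomputable def kappaLLY (G : SimpleGraph V) (d : ℕ) (x y : V) : ℝ :=
  limUnder (nhdsWithin 1 (Set.Iio (1 : ℝ))) fun p => kappa G d p x y / (1 - p)

/-- The (non-normalized) graph Laplacian `Δf(x) = ∑_{y ∼ x} (f(y) - f(x))`. -/
noncomputable def graphLap (G : SimpleGraph V) [G.LocallyFinite] (f : V → ℝ) (x : V) : ℝ :=
  ∑ y ∈ G.neighborFinset x, (f y - f x)

/-- The operator `Γ`: `2Γ(f,g) = Δ(fg) - fΔg - gΔf`. -/
noncomputable def gammaOp (G : SimpleGraph V) [G.LocallyFinite] (f g : V → ℝ) (x : V) : ℝ :=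
  (graphLap G (fun z => f z * g z) x - f x * graphLap G g x - g x * graphLap G f x) / 2

/-- The operator `Γ₂`: `2Γ₂(f) = ΔΓ(f) - 2Γ(f, Δf)`, where `Γ(f) = Γ(f,f)`. -/
noncomputable def gamma2Op (G : SimpleGraph V) [G.LocallyFinite] (f : V → ℝ) (x : V) : ℝ :=
  (graphLap G (fun z => gammaOp G f f z) x - 2 * gammaOp G f (graphLap G f) x) / 2

/-- The set of lower Bakry–Émery curvature bounds at `x`: all `K` such that
`Γ₂(f)(x) ≥ K·Γ(f)(x)` for every `f : V → ℝ`.  The Bakry–Émery curvature `K_∞(x)` is the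
largest element of this set. -/
def curvBounds (G : SimpleGraph V) [G.LocallyFinite] (x : V) : Set ℝ :=
  {K : ℝ | ∀ f : V → ℝ, K * gammaOp G f f x ≤ gamma2Op G f x}



lemma gammaOp_eq (G : SimpleGraph V) [G.LocallyFinite] (f g : V → ℝ) (u : V) :
    gammaOp G f g u = (∑ w ∈ G.neighborFinset u, (f w - f u) * (g w - g u)) / 2 := by
  unfold gammaOp graphLap
  rw [Finset.mul_sum, Finset.mul_sum, ← Finset.sum_sub_distrib, ← Finset.sum_sub_distrib]
  congr 1
  apply Finset.sum_congr rfl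
  intro w _
  ring

lemma gamma2_identity (G : SimpleGraph V) [G.LocallyFinite] {d : ℕ}
    (hreg : G.IsRegularOfDegree d) (x : V) (f : V → ℝ) :
    4 * gamma2Op G f x = (4 - 2*(d:ℝ)) * (∑ y ∈ G.neighborFinset x, (f y - f x)^2)
      + 2 * (∑ y ∈ G.neighborFinset x, (f y - f x))^2
      + ∑ y ∈ G.neighborFinset x, ∑ w ∈ (G.neighborFinset y).erase x, (f w - 2*f y + f x)^2 := by
  set N := G.neighborFinset x with hN
  set A := ∑ y ∈ N, (f y - f x)^2 with hA
  set S := ∑ y ∈ N, (f y - f x) with hS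
  have hcardN : N.card = d := hreg x
  -- per-vertex computation
  have hper : ∀ y ∈ N,
      2 * gammaOp G f f y - 2 * gammaOp G f f x
        - 2 * (f y - f x) * (graphLap G f y - graphLap G f x)
      = (∑ w ∈ (G.neighborFinset y).erase x, (f w - 2*f y + f x)^2)
        + (4 - (d:ℝ)) * (f y - f x)^2 - A + 2 * (f y - f x) * S := by
    intro y hy
    have hxy : G.Adj x y := by rwa [← SimpleGraph.mem_neighborFinset]
    have hxNy : x ∈ G.neighborFinset y := by
      rw [SimpleGraph.mem_neighborFinset]; exact hxy.symm
    have hcardNy : (G.neighborFinset y).card = d := hreg y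
    have hd1 : 1 ≤ d := by
      rw [← hcardNy]; exact Finset.card_pos.2 ⟨x, hxNy⟩
    have hcarde : ((G.neighborFinset y).erase x).card = d - 1 := by
      rw [Finset.card_erase_of_mem hxNy, hcardNy]
    -- Γ(y)
    have hGy : 2 * gammaOp G f f y
        = (f x - f y)^2 + ∑ w ∈ (G.neighborFinset y).erase x, (f w - f y)^2 := by
      rw [gammaOp_eq]
      have : ∑ w ∈ G.neighborFinset y, (f w - f y) * (f w - f y)
          = ∑ w ∈ G.neighborFinset y, (f w - f y)^2 := by
        apply Finset.sum_congr rfl; intro w _; ring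
      rw [this, ← Finset.add_sum_erase _ _ hxNy]
      ring
    have hGx : 2 * gammaOp G f f x = A := by
      rw [gammaOp_eq]
      rw [hA]
      have : ∑ w ∈ N, (f w - f x) * (f w - f x) = ∑ w ∈ N, (f w - f x)^2 := by
        apply Finset.sum_congr rfl; intro w _; ring
      rw [← hN, this]; ring
    have hLy : graphLap G f y
        = (f x - f y) + ∑ w ∈ (G.neighborFinset y).erase x, (f w - f y) := by
      unfold graphLap
      rw [← Finset.add_sum_erase _ _ hxNy]
    have hLx : graphLap G f x = S := rfl
    rw [hGy, hGx, hLy, hLx]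
    -- now pure finite-sum algebra over E := erase x
    set E := (G.neighborFinset y).erase x with hE
    have key : ∑ w ∈ E, (f w - 2*f y + f x)^2
        = (∑ w ∈ E, (f w - f y)^2) - 2*(f y - f x)*(∑ w ∈ E, (f w - f y))
          + ((d:ℝ) - 1) * (f y - f x)^2 := by
      have h1 : ∑ w ∈ E, (f w - 2*f y + f x)^2
          = ∑ w ∈ E, ((f w - f y)^2 - 2*(f y - f x)*(f w - f y) + (f y - f x)^2) := by
        apply Finset.sum_congr rfl; intro w _; ring
      rw [h1, Finset.sum_add_distrib, Finset.sum_sub_distrib, ← Finset.mul_sum,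
        Finset.sum_const, hcarde, nsmul_eq_mul]
      rw [Nat.cast_sub hd1, Nat.cast_one]
    rw [key]
    ring
  -- sum over y
  have hsum : 4 * gamma2Op G f x = ∑ y ∈ N,
      (2 * gammaOp G f f y - 2 * gammaOp G f f x
        - 2 * (f y - f x) * (graphLap G f y - graphLap G f x)) := by
    have e1 : graphLap G (fun z => gammaOp G f f z) x
        = ∑ y ∈ N, (gammaOp G f f y - gammaOp G f f x) := rfl
    have e2 : gammaOp G f (graphLap G f) x
        = (∑ y ∈ N, (f y - f x) * (graphLap G f y - graphLap G f x)) / 2 := by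
      rw [gammaOp_eq]
    have e3 : ∑ y ∈ N, (2 * gammaOp G f f y - 2 * gammaOp G f f x
        - 2 * (f y - f x) * (graphLap G f y - graphLap G f x))
        = 2 * (∑ y ∈ N, (gammaOp G f f y - gammaOp G f f x))
          - 2 * (∑ y ∈ N, (f y - f x) * (graphLap G f y - graphLap G f x)) := by
      rw [Finset.mul_sum, Finset.mul_sum, ← Finset.sum_sub_distrib]
      apply Finset.sum_congr rfl
      intro y _
      ring
    rw [e3]
    unfold gamma2Op
    rw [e1, e2]
    ring
  have h2 : ∑ y ∈ N, 2 * (f y - f x) * S = 2 * S * S := by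
    rw [show (2:ℝ) * S * S = (∑ y ∈ N, 2 * (f y - f x)) * S by rw [← Finset.mul_sum]]
    rw [← Finset.sum_mul]
  rw [hsum, Finset.sum_congr rfl hper]
  rw [Finset.sum_add_distrib, Finset.sum_sub_distrib, Finset.sum_add_distrib,
    Finset.sum_const, hcardN, nsmul_eq_mul, ← Finset.mul_sum, h2]
  ring


def GoodPair (G : SimpleGraph V) (x y u : V) : Prop :=
  ∃ w, G.Adj y w ∧ G.Adj u w ∧ ¬ G.Adj x w ∧ w ≠ x

lemma keyLemma (G : SimpleGraph V) [G.LocallyFinite] (hconn : G.Connected)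
    (d : ℕ) (hreg : G.IsRegularOfDegree d) (x : V)
    (htri : ∀ u v : V, G.Adj x u → G.Adj x v → ¬G.Adj u v)
    (hk0 : ∀ y : V, G.Adj x y → kappa G d 0 x y = 0)
    {y u₁ u₂ : V} (hxy : G.Adj x y) (hxu₁ : G.Adj x u₁) (hxu₂ : G.Adj x u₂)
    (h1y : u₁ ≠ y) (h2y : u₂ ≠ y) (h12 : u₁ ≠ u₂)
    (hb1 : ¬ GoodPair G x y u₁) (hb2 : ¬ GoodPair G x y u₂) : False := by
  set Nx := G.neighborFinset x with hNx
  set Ny := G.neighborFinset y with hNy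
  have hdeg : Nx.card = d := hreg x
  have hd1 : 1 ≤ d := by
    rw [← hdeg]
    exact Finset.card_pos.2 ⟨y, (SimpleGraph.mem_neighborFinset _ _ _).2 hxy⟩
  have hdR : 0 < (d:ℝ) := by exact_mod_cast hd1
  set mx := muMeasure G d 0 x with hmx
  set my := muMeasure G d 0 y with hmy
  -- values of the measures
  have hmx0 : ∀ u, u ∉ Nx → mx u = 0 := by
    intro u hu
    rw [hNx, SimpleGraph.mem_neighborFinset] at hu
    simp only [hmx, muMeasure]
    by_cases h : u = x
    · simp [h]
    · simp [h, hu]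
  have hmxval : ∀ u, u ∈ Nx → mx u = 1/(d:ℝ) := by
    intro u hu
    rw [hNx, SimpleGraph.mem_neighborFinset] at hu
    simp only [hmx, muMeasure, if_neg hu.ne', if_pos hu]
    norm_num
  have hmy0 : ∀ v, v ∉ Ny → my v = 0 := by
    intro v hv
    rw [hNy, SimpleGraph.mem_neighborFinset] at hv
    simp only [hmy, muMeasure]
    by_cases h : v = y
    · simp [h]
    · simp [h, hv]
  have hmyval : ∀ v, v ∈ Ny → my v = 1/(d:ℝ) := by
    intro v hv
    rw [hNy, SimpleGraph.mem_neighborFinset] at hv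
    simp only [hmy, muMeasure, if_neg hv.ne', if_pos hv]
    norm_num
  -- the Wasserstein distance equals 1
  set Sc := {c : ℝ | ∃ π, IsTransportPlan mx my π ∧ transportCost G π = c} with hSc
  have hW : sInf Sc = 1 := by
    have := hk0 y hxy
    simp only [kappa] at this
    have hW1 : W1 G mx my = 1 := by linarith
    rw [← hW1]
    rfl
  have hbdd : BddBelow Sc := by
    refine ⟨0, fun c hc => ?_⟩
    obtain ⟨π, ⟨hπ0, _, _⟩, hcost⟩ := hc
    rw [← hcost]
    exact tsum_nonneg (fun q => mul_nonneg (Nat.cast_nonneg _) (hπ0 _ _))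
  have hne : Sc.Nonempty := by
    by_contra h
    rw [Set.not_nonempty_iff_eq_empty] at h
    rw [h, Real.sInf_empty] at hW
    norm_num at hW
  have hεpos : (0:ℝ) < 1/(2*d) := by positivity
  obtain ⟨c, hcS, hclt⟩ := (csInf_lt_iff hbdd hne).1 (by rw [hW]; linarith : sInf Sc < 1 + 1/(2*(d:ℝ)))
  have hc1 : 1 ≤ c := hW ▸ csInf_le hbdd hcS
  obtain ⟨π, ⟨hπ0, hrow, hcol⟩, hcost⟩ := hcS
  set g : V × V → ℝ := fun q => (G.dist q.1 q.2 : ℝ) * π q.1 q.2 with hg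
  have hg0 : ∀ q, 0 ≤ g q := fun q => mul_nonneg (Nat.cast_nonneg _) (hπ0 _ _)
  have hcg : ∑' q, g q = c := hcost
  have hgsum : Summable g := by
    by_contra hns
    rw [tsum_eq_zero_of_not_summable hns] at hcg
    linarith
  -- rows and columns are summable
  have hrowsum : ∀ u, Summable (fun v => π u v) := by
    intro u
    have hgu : Summable (fun v => g (u, v)) :=
      hgsum.comp_injective (fun a b h => (Prod.ext_iff.1 h).2)
    apply Summable.of_nonneg_of_le (fun v => hπ0 u v)
      (f := fun v => g (u, v) + (if v = u then π u u else 0))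
    · intro v
      by_cases h : v = u
      · subst h
        simp only [if_pos rfl]
        exact le_add_of_nonneg_left (hg0 _)
      · rw [if_neg h, add_zero, hg]
        have : (1:ℝ) ≤ (G.dist u v : ℝ) := by
          exact_mod_cast hconn.pos_dist_of_ne (fun hh => h hh.symm)
        exact le_mul_of_one_le_left (hπ0 u v) this
    · exact hgu.add (summable_of_ne_finset_zero (s := {u})
        (fun v hv => if_neg (by simpa using hv)))
  have hcolsum : ∀ v, Summable (fun u => π u v) := by
    intro v
    have hgv : Summable (fun u => g (u, v)) :=
      hgsum.comp_injective (fun a b h => (Prod.ext_iff.1 h).1)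
    apply Summable.of_nonneg_of_le (fun u => hπ0 u v)
      (f := fun u => g (u, v) + (if u = v then π v v else 0))
    · intro u
      by_cases h : u = v
      · subst h
        simp only [if_pos rfl]
        exact le_add_of_nonneg_left (hg0 _)
      · rw [if_neg h, add_zero, hg]
        have : (1:ℝ) ≤ (G.dist u v : ℝ) := by
          exact_mod_cast hconn.pos_dist_of_ne h
        exact le_mul_of_one_le_left (hπ0 u v) this
    · exact hgv.add (summable_of_ne_finset_zero (s := {v})
        (fun u hu => if_neg (by simpa using hu)))
  -- support of the plan
  have hrow0 : ∀ u, mx u = 0 → ∀ v, π u v = 0 := by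
    intro u hu v
    have hle : π u v ≤ ∑' w, π u w := Summable.le_tsum (hrowsum u) v (fun w _ => hπ0 u w)
    rw [hrow u, hu] at hle
    exact le_antisymm hle (hπ0 u v)
  have hcol0 : ∀ v, my v = 0 → ∀ u, π u v = 0 := by
    intro v hv u
    have hle : π u v ≤ ∑' w, π w v := Summable.le_tsum (hcolsum v) u (fun w _ => hπ0 w v)
    rw [hcol v, hv] at hle
    exact le_antisymm hle (hπ0 u v)
  have hsupp : ∀ q : V × V, q ∉ Nx ×ˢ Ny → π q.1 q.2 = 0 := by
    intro q hq
    rw [Finset.mem_product, not_and_or] at hq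
    rcases hq with h | h
    · exact hrow0 q.1 (hmx0 q.1 h) q.2
    · exact hcol0 q.2 (hmy0 q.2 h) q.1
  -- finite versions of the constraints
  have hcfin : c = ∑ q ∈ Nx ×ˢ Ny, g q := by
    rw [← hcg]
    exact tsum_eq_sum (fun q hq => by rw [hg]; simp [hsupp q hq])
  have hrowfin : ∀ u ∈ Nx, ∑ v ∈ Ny, π u v = 1/(d:ℝ) := by
    intro u hu
    have h1 : ∑' v, π u v = ∑ v ∈ Ny, π u v :=
      tsum_eq_sum (fun v hv => hcol0 v (hmy0 v hv) u)
    rw [← h1, hrow u, hmxval u hu]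
  have hxNy : x ∈ Ny := (SimpleGraph.mem_neighborFinset _ _ _).2 hxy.symm
  have hcolxfin : ∑ u ∈ Nx, π u x = 1/(d:ℝ) := by
    have h1 : ∑' u, π u x = ∑ u ∈ Nx, π u x :=
      tsum_eq_sum (fun u hu => hrow0 u (hmx0 u hu) x)
    rw [← h1, hcol x, hmyval x hxNy]
  -- distances are at least 1 on the support
  have hneq : ∀ u ∈ Nx, ∀ v ∈ Ny, u ≠ v := by
    intro u hu v hv he
    rw [hNx, SimpleGraph.mem_neighborFinset] at hu
    rw [hNy, SimpleGraph.mem_neighborFinset] at hv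
    exact htri y u hxy hu (he ▸ hv)
  have hdist1 : ∀ u ∈ Nx, ∀ v ∈ Ny, (1:ℝ) ≤ (G.dist u v : ℝ) := by
    intro u hu v hv
    exact_mod_cast hconn.pos_dist_of_ne (hneq u hu v hv)
  -- mass and excess
  have hmass : ∑ q ∈ Nx ×ˢ Ny, π q.1 q.2 = 1 := by
    rw [Finset.sum_product, Finset.sum_congr rfl hrowfin, Finset.sum_const, hdeg,
      nsmul_eq_mul]
    field_simp
  have hexcess : ∑ q ∈ Nx ×ˢ Ny, ((G.dist q.1 q.2 : ℝ) - 1) * π q.1 q.2 = c - 1 := by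
    have h1 : ∀ q ∈ Nx ×ˢ Ny, g q = π q.1 q.2 + ((G.dist q.1 q.2 : ℝ) - 1) * π q.1 q.2 := by
      intro q _
      rw [hg]
      ring
    rw [hcfin, Finset.sum_congr rfl h1, Finset.sum_add_distrib, hmass]
    ring
  have hexnonneg : ∀ q ∈ Nx ×ˢ Ny, 0 ≤ ((G.dist q.1 q.2 : ℝ) - 1) * π q.1 q.2 := by
    intro q hq
    rw [Finset.mem_product] at hq
    exact mul_nonneg (by linarith [hdist1 q.1 hq.1 q.2 hq.2]) (hπ0 _ _)
  -- the two bad neighbours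
  have hu₁Nx : u₁ ∈ Nx := (SimpleGraph.mem_neighborFinset _ _ _).2 hxu₁
  have hu₂Nx : u₂ ∈ Nx := (SimpleGraph.mem_neighborFinset _ _ _).2 hxu₂
  have E1 : ∀ u, u ∈ Nx → u ≠ y → ¬ GoodPair G x y u →
      1/(d:ℝ) - π u x ≤ ∑ v ∈ Ny.erase x, ((G.dist u v : ℝ) - 1) * π u v := by
    intro u huNx huy hbad
    have hxu : G.Adj x u := by rwa [hNx, SimpleGraph.mem_neighborFinset] at huNx
    have h1 : π u x + ∑ v ∈ Ny.erase x, π u v = 1/(d:ℝ) := by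
      rw [Finset.add_sum_erase _ _ hxNy]
      exact hrowfin u huNx
    have h2 : ∀ v ∈ Ny.erase x, π u v ≤ ((G.dist u v : ℝ) - 1) * π u v := by
      intro v hv
      obtain ⟨hvx, hvNy⟩ := Finset.mem_erase.1 hv
      have hyv : G.Adj y v := by rwa [hNy, SimpleGraph.mem_neighborFinset] at hvNy
      have hnadj : ¬ G.Adj u v := by
        intro hadj
        apply hbad
        refine ⟨v, hyv, hadj, ?_, hvx⟩
        intro hxv
        exact htri y v hxy hxv hyv
      have hdge2 : 2 ≤ G.dist u v := by
        have h0 : G.dist u v ≠ 0 := by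
          intro h0
          exact hneq u huNx v hvNy (hconn.dist_eq_zero_iff.1 h0)
        have h1' : G.dist u v ≠ 1 := by
          intro h1'
          exact hnadj (SimpleGraph.dist_eq_one_iff_adj.1 h1')
        omega
      have : (2:ℝ) ≤ (G.dist u v : ℝ) := by exact_mod_cast hdge2
      nlinarith [hπ0 u v]
    have h3 : ∑ v ∈ Ny.erase x, π u v ≤ ∑ v ∈ Ny.erase x, ((G.dist u v : ℝ) - 1) * π u v :=
      Finset.sum_le_sum h2
    linarith
  have E2 : ∑ v ∈ Ny.erase x, ((G.dist u₁ v : ℝ) - 1) * π u₁ v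
      + ∑ v ∈ Ny.erase x, ((G.dist u₂ v : ℝ) - 1) * π u₂ v ≤ c - 1 := by
    have h1 : ∑ v ∈ Ny.erase x, ((G.dist u₁ v : ℝ) - 1) * π u₁ v
        + ∑ v ∈ Ny.erase x, ((G.dist u₂ v : ℝ) - 1) * π u₂ v
        = ∑ q ∈ ({u₁, u₂} : Finset V) ×ˢ Ny.erase x, ((G.dist q.1 q.2 : ℝ) - 1) * π q.1 q.2 := by
      rw [Finset.sum_product, Finset.sum_pair h12]
    rw [h1, ← hexcess]
    apply Finset.sum_le_sum_of_subset_of_nonneg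
    · apply Finset.product_subset_product
      · intro z hz
        simp only [Finset.mem_insert, Finset.mem_singleton] at hz
        rcases hz with h | h <;> subst h <;> assumption
      · exact Finset.erase_subset _ _
    · intro q hq _
      exact hexnonneg q hq
  have E3 : π u₁ x + π u₂ x ≤ 1/(d:ℝ) := by
    calc π u₁ x + π u₂ x = ∑ u ∈ ({u₁, u₂} : Finset V), π u x :=
          (Finset.sum_pair (f := fun u => π u x) h12).symm
      _ ≤ ∑ u ∈ Nx, π u x := by
          apply Finset.sum_le_sum_of_subset_of_nonneg
          · intro z hz
            simp only [Finset.mem_insert, Finset.mem_singleton] at hz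
            rcases hz with h | h <;> subst h <;> assumption
          · intro u _ _
            exact hπ0 u x
      _ = 1/(d:ℝ) := hcolxfin
  have hhalf : (1:ℝ)/(2*(d:ℝ)) = (1/(d:ℝ))/2 := by
    rw [div_div, mul_comm]
  have hE1a := E1 u₁ hu₁Nx h1y hb1
  have hE1b := E1 u₂ hu₂Nx h2y hb2
  have hr : 0 < 1/(d:ℝ) := by positivity
  rw [hhalf] at hclt
  linarith


lemma mainAux (G : SimpleGraph V) [G.LocallyFinite] (hconn : G.Connected)
    (d : ℕ) (hreg : G.IsRegularOfDegree d) (x : V)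
    (htri : ∀ u v : V, G.Adj x u → G.Adj x v → ¬G.Adj u v)
    (hin : ∀ z : V, G.dist x z = 2 → (G.neighborSet z ∩ G.neighborSet x).ncard ≤ 2)
    (key : ∀ y u₁ u₂ : V, G.Adj x y → G.Adj x u₁ → G.Adj x u₂ → u₁ ≠ y → u₂ ≠ y →
      u₁ ≠ u₂ → ¬ GoodPair G x y u₁ → ¬ GoodPair G x y u₂ → False)
    (f : V → ℝ) : 0 ≤ gamma2Op G f x := by
  set N := G.neighborFinset x with hN
  set A := ∑ y ∈ N, (f y - f x)^2 with hA
  set S := ∑ y ∈ N, (f y - f x) with hS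
  set T := ∑ y ∈ N, ∑ w ∈ (G.neighborFinset y).erase x, (f w - 2*f y + f x)^2 with hT
  have hid : 4 * gamma2Op G f x = (4 - 2*(d:ℝ)) * A + 2 * S^2 + T :=
    gamma2_identity G hreg x f
  -- the goal reduces to (2d-4)A ≤ 2S² + T
  suffices hmain : (2*(d:ℝ) - 4) * A ≤ 2 * S^2 + T by linarith
  -- Symmetry of GoodPair
  have hGsymm : ∀ y u : V, GoodPair G x y u → GoodPair G x u y := by
    rintro y u ⟨w, h1, h2, h3, h4⟩; exact ⟨w, h2, h1, h3, h4⟩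
  -- the pair sets
  set t : V × V → ℝ := fun p => (f p.1 - f p.2)^2 with ht
  set Pairs := (N ×ˢ N).filter (fun p => p.1 ≠ p.2 ∧ GoodPair G x p.1 p.2) with hPairs
  set Bad := (N ×ˢ N).filter (fun p => p.1 ≠ p.2 ∧ ¬ GoodPair G x p.1 p.2) with hBad
  have hcardN : N.card = d := hreg x
  -- Step 1 : total sum of t over N ×ˢ N
  have htotal : ∑ p ∈ N ×ˢ N, t p = 2*(d:ℝ)*A - 2*S^2 := by
    rw [Finset.sum_product]
    have hin2 : ∀ y ∈ N, ∑ u ∈ N, t (y, u)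
        = (d:ℝ)*(f y - f x)^2 + A - 2*(f y - f x)*S := by
      intro y _
      have : ∀ u ∈ N, t (y, u)
          = (f y - f x)^2 + (f u - f x)^2 - 2*(f y - f x)*(f u - f x) := by
        intro u _; simp only [ht]; ring
      rw [Finset.sum_congr rfl this, Finset.sum_sub_distrib, Finset.sum_add_distrib,
        Finset.sum_const, hcardN, nsmul_eq_mul, ← Finset.mul_sum, ← hS, ← hA]
    rw [Finset.sum_congr rfl hin2, Finset.sum_sub_distrib, Finset.sum_add_distrib,
      Finset.sum_const, hcardN, nsmul_eq_mul, ← Finset.mul_sum, ← hA]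
    have : ∑ y ∈ N, 2*(f y - f x)*S = 2*S*S := by
      rw [show (2:ℝ) * S * S = (∑ y ∈ N, 2 * (f y - f x)) * S by rw [← Finset.mul_sum]]
      rw [← Finset.sum_mul]
    rw [this]
    ring
  -- Step 2 : T bounds the sum of t over Pairs
  set Z := N.biUnion (fun y => (G.neighborFinset y).erase x) with hZ
  have hTZ : T = ∑ w ∈ Z, ∑ y ∈ N.filter (fun y => G.Adj y w), (f w - 2*f y + f x)^2 := by
    rw [hT]
    have h1 : ∀ y ∈ N, ∑ w ∈ (G.neighborFinset y).erase x, (f w - 2*f y + f x)^2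
        = ∑ w ∈ Z, if G.Adj y w then (f w - 2*f y + f x)^2 else 0 := by
      intro y hy
      have he : (G.neighborFinset y).erase x = Z.filter (fun w => G.Adj y w) := by
        ext w
        simp only [hZ, Finset.mem_filter, Finset.mem_biUnion, Finset.mem_erase,
          SimpleGraph.mem_neighborFinset]
        constructor
        · rintro ⟨hwx, hyw⟩
          exact ⟨⟨y, hy, hwx, hyw⟩, hyw⟩
        · rintro ⟨⟨y', _, hwx, _⟩, hyw⟩
          exact ⟨hwx, hyw⟩
      rw [he, Finset.sum_filter]
    rw [Finset.sum_congr rfl h1, Finset.sum_comm]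
    apply Finset.sum_congr rfl
    intro w _
    rw [Finset.sum_filter]
  set psi : V × V → V := fun p => if h : GoodPair G x p.1 p.2 then h.choose else x
    with hpsidef
  have hpsispec : ∀ p : V × V, ∀ hg : GoodPair G x p.1 p.2,
      G.Adj p.1 (psi p) ∧ G.Adj p.2 (psi p) ∧ ¬G.Adj x (psi p) ∧ psi p ≠ x := by
    intro p hg
    have : psi p = hg.choose := by simp only [hpsidef]; rw [dif_pos hg]
    rw [this]
    exact hg.choose_spec
  have hmapsZ : ∀ p ∈ Pairs, psi p ∈ Z := by
    intro p hp
    simp only [hPairs, Finset.mem_filter, Finset.mem_product] at hp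
    obtain ⟨⟨h1N, h2N⟩, hne, hg⟩ := hp
    obtain ⟨ha1, ha2, hax, hnx⟩ := hpsispec p hg
    rw [hZ, Finset.mem_biUnion]
    exact ⟨p.1, h1N, Finset.mem_erase.2 ⟨hnx, (SimpleGraph.mem_neighborFinset _ _ _).2 ha1⟩⟩
  have hTge : ∑ p ∈ Pairs, t p ≤ T := by
    rw [← Finset.sum_fiberwise_of_maps_to hmapsZ t, hTZ]
    apply Finset.sum_le_sum
    intro w hwZ
    rcases (Pairs.filter (fun p => psi p = w)).eq_empty_or_nonempty with he | ⟨p₀, hp₀⟩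
    · rw [he, Finset.sum_empty]
      exact Finset.sum_nonneg (fun _ _ => sq_nonneg _)
    · simp only [Finset.mem_filter] at hp₀
      obtain ⟨hp₀P, hψ₀⟩ := hp₀
      have hp₀P' := hp₀P
      simp only [hPairs, Finset.mem_filter, Finset.mem_product] at hp₀P'
      obtain ⟨⟨h1N, h2N⟩, hne0, hg0⟩ := hp₀P'
      obtain ⟨hw1, hw2, hw3, hw4⟩ := hpsispec p₀ hg0
      rw [hψ₀] at hw1 hw2 hw3 hw4
      have hxp1 : G.Adj x p₀.1 := by rwa [← SimpleGraph.mem_neighborFinset, ← hN]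
      have hdist : G.dist x w = 2 := by
        have hle : G.dist x w ≤ 2 := by
          have := SimpleGraph.dist_le
            (SimpleGraph.Walk.cons hxp1 (SimpleGraph.Walk.cons hw1 SimpleGraph.Walk.nil))
          simpa using this
        have h0 : G.dist x w ≠ 0 := by
          intro h0
          rw [hconn.dist_eq_zero_iff] at h0
          exact hw4 h0.symm
        have h1 : G.dist x w ≠ 1 := by
          intro h1
          rw [SimpleGraph.dist_eq_one_iff_adj] at h1
          exact hw3 h1
        omega
      have hcard2 : (N.filter (fun y => G.Adj y w)).card ≤ 2 := by
        have hh := hin w hdist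
        have hset : (G.neighborSet w ∩ G.neighborSet x)
            = ↑(N.filter (fun y => G.Adj y w)) := by
          ext z
          simp only [Set.mem_inter_iff, SimpleGraph.mem_neighborSet, Finset.coe_filter,
            Set.mem_setOf_eq, hN, SimpleGraph.mem_neighborFinset]
          constructor
          · rintro ⟨h1, h2⟩; exact ⟨h2, h1.symm⟩
          · rintro ⟨h1, h2⟩; exact ⟨h2.symm, h1⟩
        rw [hset, Set.ncard_coe_finset] at hh
        exact hh
      have hMeq : N.filter (fun y => G.Adj y w) = {p₀.1, p₀.2} := by
        symm
        apply Finset.eq_of_subset_of_card_le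
        · intro z hz
          simp only [Finset.mem_insert, Finset.mem_singleton] at hz
          rcases hz with h | h <;> subst h <;>
            simp only [Finset.mem_filter] <;> exact ⟨by assumption, by assumption⟩
        · rw [Finset.card_pair hne0]
          exact hcard2
      have hfibsub : Pairs.filter (fun p => psi p = w)
          ⊆ {(p₀.1, p₀.2), (p₀.2, p₀.1)} := by
        intro p hp
        simp only [Finset.mem_filter] at hp
        obtain ⟨hpP, hψ⟩ := hp
        have hpP' := hpP
        simp only [hPairs, Finset.mem_filter, Finset.mem_product] at hpP'
        obtain ⟨⟨k1N, k2N⟩, kne, kg⟩ := hpP'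
        obtain ⟨kw1, kw2, _, _⟩ := hpsispec p kg
        rw [hψ] at kw1 kw2
        have k1M : p.1 ∈ ({p₀.1, p₀.2} : Finset V) := by
          rw [← hMeq]; exact Finset.mem_filter.2 ⟨k1N, kw1⟩
        have k2M : p.2 ∈ ({p₀.1, p₀.2} : Finset V) := by
          rw [← hMeq]; exact Finset.mem_filter.2 ⟨k2N, kw2⟩
        simp only [Finset.mem_insert, Finset.mem_singleton] at k1M k2M ⊢
        rcases k1M with h1 | h1 <;> rcases k2M with h2 | h2
        · exact absurd (h1.trans h2.symm) kne
        · left; exact Prod.ext h1 h2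
        · right; exact Prod.ext h1 h2
        · exact absurd (h1.trans h2.symm) kne
      have hpairne : (p₀.1, p₀.2) ≠ (p₀.2, p₀.1) := by
        intro h
        exact hne0 (congrArg Prod.fst h)
      calc ∑ p ∈ Pairs.filter (fun p => psi p = w), t p
          ≤ ∑ p ∈ ({(p₀.1, p₀.2), (p₀.2, p₀.1)} : Finset (V × V)), t p :=
            Finset.sum_le_sum_of_subset_of_nonneg hfibsub (fun _ _ _ => sq_nonneg _)
        _ = t (p₀.1, p₀.2) + t (p₀.2, p₀.1) := Finset.sum_pair hpairne
        _ ≤ ∑ y ∈ N.filter (fun y => G.Adj y w), (f w - 2*f y + f x)^2 := by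
            rw [hMeq, Finset.sum_pair hne0]
            simp only [ht]
            nlinarith [sq_nonneg (f w + f x - f p₀.1 - f p₀.2)]
  -- Step 3 : the Bad sum is small
  have hfib1 : ∀ y ∈ N, (Bad.filter (fun p => p.1 = y)).card ≤ 1 := by
    intro y hyN
    rw [Finset.card_le_one]
    intro p hp q hq
    simp only [Finset.mem_filter, hBad, Finset.mem_product] at hp hq
    obtain ⟨⟨⟨hp1N, hp2N⟩, hpne, hpg⟩, hp1⟩ := hp
    obtain ⟨⟨⟨hq1N, hq2N⟩, hqne, hqg⟩, hq1⟩ := hq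
    by_contra hne
    have h2ne : p.2 ≠ q.2 := by
      intro h; exact hne (Prod.ext (hp1.trans hq1.symm) h)
    rw [hN, SimpleGraph.mem_neighborFinset] at hyN hp1N hp2N hq1N hq2N
    exact key y p.2 q.2 hyN hp2N hq2N (fun h => hpne (by rw [hp1, h]))
      (fun h => hqne (by rw [hq1, h])) h2ne
      (by rw [← hp1]; exact hpg) (by rw [← hq1]; exact hqg)
  have hfib2 : ∀ y ∈ N, (Bad.filter (fun p => p.2 = y)).card ≤ 1 := by
    intro y hyN
    rw [Finset.card_le_one]
    intro p hp q hq
    simp only [Finset.mem_filter, hBad, Finset.mem_product] at hp hq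
    obtain ⟨⟨⟨hp1N, hp2N⟩, hpne, hpg⟩, hp2⟩ := hp
    obtain ⟨⟨⟨hq1N, hq2N⟩, hqne, hqg⟩, hq2⟩ := hq
    by_contra hne
    have h1ne : p.1 ≠ q.1 := by
      intro h; exact hne (Prod.ext h (hp2.trans hq2.symm))
    rw [hN, SimpleGraph.mem_neighborFinset] at hyN hp1N hp2N hq1N hq2N
    exact key y p.1 q.1 hyN hp1N hq1N (fun h => hpne (by rw [h, hp2]))
      (fun h => hqne (by rw [h, hq2])) h1ne
      (fun h => hpg (by rw [hp2]; exact hGsymm _ _ h))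
      (fun h => hqg (by rw [hq2]; exact hGsymm _ _ h))
  have hBadle : ∑ p ∈ Bad, t p ≤ 4 * A := by
    have hmaps1 : ∀ p ∈ Bad, p.1 ∈ N := by
      intro p hp
      simp only [hBad, Finset.mem_filter, Finset.mem_product] at hp
      exact hp.1.1
    have hmaps2 : ∀ p ∈ Bad, p.2 ∈ N := by
      intro p hp
      simp only [hBad, Finset.mem_filter, Finset.mem_product] at hp
      exact hp.1.2
    have hb1 : ∑ p ∈ Bad, (f p.1 - f x)^2 ≤ A := by
      rw [← Finset.sum_fiberwise_of_maps_to hmaps1 (fun p => (f p.1 - f x)^2), hA]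
      apply Finset.sum_le_sum
      intro y hy
      have hcong : ∀ p ∈ Bad.filter (fun p => p.1 = y),
          (f p.1 - f x)^2 = (f y - f x)^2 := by
        intro p hp
        rw [(Finset.mem_filter.1 hp).2]
      rw [Finset.sum_congr rfl hcong, Finset.sum_const, nsmul_eq_mul]
      have hle1 : ((Bad.filter (fun p => p.1 = y)).card : ℝ) ≤ 1 := by
        exact_mod_cast hfib1 y hy
      nlinarith [sq_nonneg (f y - f x)]
    have hb2 : ∑ p ∈ Bad, (f p.2 - f x)^2 ≤ A := by
      rw [← Finset.sum_fiberwise_of_maps_to hmaps2 (fun p => (f p.2 - f x)^2), hA]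
      apply Finset.sum_le_sum
      intro y hy
      have hcong : ∀ p ∈ Bad.filter (fun p => p.2 = y),
          (f p.2 - f x)^2 = (f y - f x)^2 := by
        intro p hp
        rw [(Finset.mem_filter.1 hp).2]
      rw [Finset.sum_congr rfl hcong, Finset.sum_const, nsmul_eq_mul]
      have hle1 : ((Bad.filter (fun p => p.2 = y)).card : ℝ) ≤ 1 := by
        exact_mod_cast hfib2 y hy
      nlinarith [sq_nonneg (f y - f x)]
    have hterm : ∀ p ∈ Bad, t p ≤ 2*(f p.1 - f x)^2 + 2*(f p.2 - f x)^2 := by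
      intro p _
      simp only [ht]
      nlinarith [sq_nonneg (f p.1 + f p.2 - 2*f x)]
    calc ∑ p ∈ Bad, t p ≤ ∑ p ∈ Bad, (2*(f p.1 - f x)^2 + 2*(f p.2 - f x)^2) :=
          Finset.sum_le_sum hterm
      _ = 2 * ∑ p ∈ Bad, (f p.1 - f x)^2 + 2 * ∑ p ∈ Bad, (f p.2 - f x)^2 := by
          rw [Finset.sum_add_distrib, Finset.mul_sum, Finset.mul_sum]
      _ ≤ 4 * A := by linarith
  -- Step 4 : combine
  have hsplit : ∑ p ∈ N ×ˢ N, t p ≤ ∑ p ∈ Pairs, t p + ∑ p ∈ Bad, t p := by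
    rw [← Finset.sum_filter_add_sum_filter_not (N ×ˢ N)
      (fun p => p.1 ≠ p.2 ∧ GoodPair G x p.1 p.2) t]
    have h1 : ∑ p ∈ (N ×ˢ N).filter (fun p => p.1 ≠ p.2 ∧ GoodPair G x p.1 p.2), t p
        = ∑ p ∈ Pairs, t p := by rw [hPairs]
    have h2 : ∑ p ∈ (N ×ˢ N).filter (fun p => ¬(p.1 ≠ p.2 ∧ GoodPair G x p.1 p.2)), t p
        = ∑ p ∈ Bad, t p := by
      symm
      apply Finset.sum_subset
      · intro p hp
        simp only [hBad, Finset.mem_filter] at hp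
        exact Finset.mem_filter.2 ⟨hp.1, fun hc => hp.2.2 hc.2⟩
      · intro p hpmem hpnot
        simp only [Finset.mem_filter, not_and, not_not] at hpmem hpnot
        have hdiag : p.1 = p.2 := by
          by_contra hne
          simp only [hBad, Finset.mem_filter, not_and, not_not] at hpnot
          exact hpmem.2 hne (hpnot hpmem.1 hne)
        simp only [ht, hdiag, sub_self]
        ring
    rw [h1, h2]
  linarith


/-- Let `x` be a vertex of a simple, connected, `d`-regular graph, not
contained in a triangle and with `d_x^-(z) ≤ 2` for all `z ∈ S₂(x)`. If `κ₀(x,y) = 0` for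
all `y ∈ S₁(x)`, then the Bakry–Émery curvature satisfies `K_∞(x) ≥ 0` (that is, `0` is a
lower curvature bound at `x`). -/
theorem stmt_13 (G : SimpleGraph V) [G.LocallyFinite] (hconn : G.Connected)
    (d : ℕ) (hreg : G.IsRegularOfDegree d) (x : V)
    (htri : ∀ u v : V, G.Adj x u → G.Adj x v → ¬G.Adj u v)
    (hin : ∀ z : V, G.dist x z = 2 → (G.neighborSet z ∩ G.neighborSet x).ncard ≤ 2)
    (hk : ∀ y : V, G.Adj x y → kappa G d 0 x y = 0) :
    0 ∈ curvBounds G x := by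
  simp only [curvBounds, Set.mem_setOf_eq]
  intro f
  rw [zero_mul]
  exact mainAux G hconn d hreg x htri hin
    (fun y u₁ u₂ hy h1 h2 h1y h2y h12 hb1 hb2 =>
      keyLemma G hconn d hreg x htri hk hy h1 h2 h1y h2y h12 hb1 hb2) f
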